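/- arXiv:2003.00681 — 2 statements merged into one kernel-verified Lean document; each statement's English description precedes it below -/
import Mathlib

section
/- Let Δ be a generalised quadrangle (an incidence geometry of points and lines with no triangles: there do not exist three pairwise distinct lines pairwise meeting in three distinct points), and let G be a group acting on Δ by type-preserving collineations. Let l be a line of Δ. If for every g ∈ G the lines l and l^g share a common point (i.e., no g maps l to a line disjoint from l), then either l^g = l for all g ∈ G, or there is a single point q lying on every line l^g (g ∈ G), and this point q is fixed by every element of G. -/
/-- A generalised quadrangle, presented as a point-line incidence geometry in which two
distinct lines meet in at most one point and which contains no triangles (there are no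
three pairwise distinct lines pairwise meeting in three distinct points; equivalently,
three pairwise distinct pairwise intersecting lines are concurrent). -/
structure GenQuadrangle where
  Point : Type
  Line : Type
  Incident : Point → Line → Prop
  meet_unique : ∀ (p q : Point) (l m : Line), l ≠ m →
    Incident p l → Incident p m → Incident q l → Incident q m → p = q
  no_triangle : ∀ (l₁ l₂ l₃ : Line) (p₁₂ p₂₃ p₁₃ : Point),
    l₁ ≠ l₂ → l₂ ≠ l₃ → l₁ ≠ l₃ →
    Incident p₁₂ l₁ → Incident p₁₂ l₂ →
    Incident p₂₃ l₂ → Incident p₂₃ l₃ →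
    Incident p₁₃ l₁ → Incident p₁₃ l₃ →
    p₁₂ = p₂₃ ∧ p₁₂ = p₁₃

/-- Let `G` act on a generalised quadrangle `Δ` by type-preserving
collineations and let `l` be a line. If for every `g ∈ G` the lines `l` and `l^g` share a
common point, then either `l^g = l` for all `g`, or there is a single point `q` lying on
every line `l^g` which is fixed by every element of `G`. -/
theorem stmt1 (Δ : GenQuadrangle) (G : Type*) [Group G]
    (ρP : G →* Equiv.Perm Δ.Point) (ρL : G →* Equiv.Perm Δ.Line)
    (hρ : ∀ (g : G) (q : Δ.Point) (m : Δ.Line),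
      Δ.Incident q m ↔ Δ.Incident (ρP g q) (ρL g m))
    (l : Δ.Line)
    (hmeet : ∀ g : G, ∃ q : Δ.Point, Δ.Incident q l ∧ Δ.Incident q (ρL g l)) :
    (∀ g : G, ρL g l = l) ∨
    (∃ q : Δ.Point, (∀ g : G, Δ.Incident q (ρL g l)) ∧ (∀ g : G, ρP g q = q)) := by
  by_cases hfix : ∀ g : G, ρL g l = l
  · exact Or.inl hfix
  push_neg at hfix
  obtain ⟨g, hg⟩ := hfix
  obtain ⟨q, hql, hqg⟩ := hmeet g
  have horbit : ∀ a b : G, ∃ p : Δ.Point,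
      Δ.Incident p (ρL a l) ∧ Δ.Incident p (ρL b l) := by
    intro a b
    obtain ⟨p, hp1, hp2⟩ := hmeet (a⁻¹ * b)
    refine ⟨ρP a p, (hρ a p l).mp hp1, ?_⟩
    have h3 := (hρ a p (ρL (a⁻¹ * b) l)).mp hp2
    rwa [show ρL a (ρL (a⁻¹ * b) l) = ρL b l by
      rw [← Equiv.Perm.mul_apply, ← map_mul, mul_inv_cancel_left]] at h3
  have hkey : ∀ h : G, Δ.Incident q (ρL h l) := by
    intro h
    by_cases h1 : ρL h l = l
    · rw [h1]; exact hql
    by_cases h2 : ρL h l = ρL g l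
    · rw [h2]; exact hqg
    · obtain ⟨p₁, hp₁l, hp₁h⟩ := horbit 1 h
      rw [map_one, Equiv.Perm.one_apply] at hp₁l
      obtain ⟨p₂, hp₂g, hp₂h⟩ := horbit g h
      have ht := Δ.no_triangle l (ρL g l) (ρL h l) q p₂ p₁
        (fun e => hg e.symm) (fun e => h2 e.symm) (fun e => h1 e.symm)
        hql hqg hp₂g hp₂h hp₁l hp₁h
      rw [ht.2]; exact hp₁h
  refine Or.inr ⟨q, hkey, fun h => ?_⟩
  have hA : Δ.Incident (ρP h q) (ρL h l) := (hρ h q l).mp hql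
  have hB : Δ.Incident (ρP h q) (ρL (h * g) l) := by
    have h4 := (hρ h q (ρL g l)).mp hqg
    rwa [← Equiv.Perm.mul_apply, ← map_mul] at h4
  have hne : ρL h l ≠ ρL (h * g) l := by
    intro e
    exact hg ((ρL h).injective (by rwa [map_mul, Equiv.Perm.mul_apply] at e)).symm
  exact Δ.meet_unique (ρP h q) q (ρL h l) (ρL (h * g) l) hne hA hB (hkey h) (hkey (h * g))
end

section
/- Let T be a complete ℝ-tree and let A and B be disjoint nonempty closed subtrees (closed convex subsets) of T. Then there exists a unique geodesic segment [a, b] with a ∈ A, b ∈ B realizing the distance d(A, B), i.e., d(a, b) = d(A, B) > 0, and this segment meets A only in a and B only in b. -/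
open Filter Topology

theorem my_exists_between {T : Type*} [MetricSpace T] [CompleteSpace T]
    (hmid : ∀ x y : T, ∃ m : T, dist x m = dist x y / 2 ∧ dist m y = dist x y / 2)
    (x y : T) (t : ℝ) (h0 : 0 ≤ t) (ht : t ≤ dist x y) :
    ∃ z : T, dist x z = t ∧ dist x z + dist z y = dist x y := by
  classical
  choose mid hm1 hm2 using hmid
  set D := dist x y with hD
  set F : T × T → T × T := fun p =>
    if dist x (mid p.1 p.2) ≤ t then (mid p.1 p.2, p.2) else (p.1, mid p.1 p.2) with hF
  set s : ℕ → T × T := fun n => F^[n] (x, y) with hsdef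
  have hs0 : s 0 = (x, y) := rfl
  have hssucc : ∀ n, s (n+1) = F (s n) := fun n => Function.iterate_succ_apply' F n _
  have inv : ∀ n, dist x (s n).1 + dist (s n).1 (s n).2 = dist x (s n).2 ∧
      dist x (s n).2 + dist (s n).2 y = dist x y ∧
      dist (s n).1 (s n).2 = D / 2^n ∧ dist x (s n).1 ≤ t ∧ t ≤ dist x (s n).2 := by
    intro n
    induction n with
    | zero => simp [hs0, dist_self, h0, ht, ← hD]
    | succ n ih =>
      obtain ⟨i1, i2, i3, i4, i5⟩ := ih
      set z := (s n).1
      set w := (s n).2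
      have hzm : dist z (mid z w) = dist z w / 2 := hm1 z w
      have hmw : dist (mid z w) w = dist z w / 2 := hm2 z w
      have htr1 : dist x (mid z w) ≤ dist x z + dist z (mid z w) := dist_triangle _ _ _
      have htr2 : dist x w ≤ dist x (mid z w) + dist (mid z w) w := dist_triangle _ _ _
      have hxm : dist x (mid z w) = dist x z + dist z w / 2 := by linarith
      have hxmw : dist x (mid z w) + dist (mid z w) w = dist x w := by linarith
      have htr3 : dist (mid z w) y ≤ dist (mid z w) w + dist w y := dist_triangle _ _ _
      have htr4 : dist x y ≤ dist x (mid z w) + dist (mid z w) y := dist_triangle _ _ _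
      have hxmy : dist x (mid z w) + dist (mid z w) y = dist x y := by linarith
      have hF' : F (s n) = if dist x (mid z w) ≤ t then (mid z w, w) else (z, mid z w) := rfl
      rw [hssucc, hF']
      by_cases hc : dist x (mid z w) ≤ t
      · rw [if_pos hc]
        refine ⟨hxmw, i2, ?_, hc, i5⟩
        simp only [hmw, i3]
        ring
      · rw [if_neg hc]
        refine ⟨by linarith, hxmy, ?_, i4, le_of_lt (not_le.mp hc)⟩
        simp only [hzm, i3]
        ring
  have key : ∀ n, dist ((s n).1) ((s (n+1)).1) ≤ D * (1/2)^n := by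
    intro n
    obtain ⟨_, _, i3, _, _⟩ := inv n
    have hpow : ((1:ℝ)/2)^n = 1/2^n := by rw [div_pow, one_pow]
    have h2n : (0:ℝ) < 2^n := by positivity
    have hDnn : 0 ≤ D := dist_nonneg
    have hF' : F (s n) = if dist x (mid (s n).1 (s n).2) ≤ t
        then (mid (s n).1 (s n).2, (s n).2) else ((s n).1, mid (s n).1 (s n).2) := rfl
    rw [hssucc, hF']
    by_cases hc : dist x (mid (s n).1 (s n).2) ≤ t
    · rw [if_pos hc]
      have := hm1 (s n).1 (s n).2
      rw [this, i3, hpow]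
      rw [div_div]
      calc D / (2^n * 2) ≤ D / 2^n := by
            apply div_le_div_of_nonneg_left hDnn h2n; · linarith
        _ = D * (1/2^n) := by ring
    · rw [if_neg hc]
      simp only [dist_self]
      positivity
  have hcs : CauchySeq (fun n => (s n).1) :=
    cauchySeq_of_le_geometric (1/2) D (by norm_num) key
  obtain ⟨l, hl⟩ := cauchySeq_tendsto_of_complete hcs
  have h1 : Tendsto (fun n => dist x ((s n).1)) atTop (𝓝 (dist x l)) :=
    tendsto_const_nhds.dist hl
  have hhalf : Tendsto (fun n : ℕ => ((1:ℝ)/2)^n) atTop (𝓝 0) := by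
    apply tendsto_pow_atTop_nhds_zero_of_lt_one <;> norm_num
  have hlow : Tendsto (fun n : ℕ => t - D * (1/2)^n) atTop (𝓝 t) := by
    have h := (hhalf.const_mul D).const_sub t
    simpa using h
  have h2 : Tendsto (fun n => dist x ((s n).1)) atTop (𝓝 t) := by
    apply tendsto_of_tendsto_of_tendsto_of_le_of_le hlow tendsto_const_nhds
    · intro n
      dsimp only
      obtain ⟨i1, _, i3, _, i5⟩ := inv n
      have hpow : ((1:ℝ)/2)^n = 1/2^n := by rw [div_pow, one_pow]
      rw [hpow]
      have : D * (1/2^n) = D / 2^n := by ring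
      rw [this]
      linarith
    · intro n; dsimp only; exact (inv n).2.2.2.1
  have hxl : dist x l = t := tendsto_nhds_unique h1 h2
  have hbet : ∀ n, dist x (s n).1 + dist (s n).1 y = dist x y := by
    intro n
    obtain ⟨i1, i2, _, _, _⟩ := inv n
    have t1 : dist (s n).1 y ≤ dist (s n).1 (s n).2 + dist (s n).2 y := dist_triangle _ _ _
    have t2 : dist x y ≤ dist x (s n).1 + dist (s n).1 y := dist_triangle _ _ _
    linarith
  have h3 : Tendsto (fun n => dist x ((s n).1) + dist ((s n).1) y) atTop
      (𝓝 (dist x l + dist l y)) := (tendsto_const_nhds.dist hl).add (hl.dist tendsto_const_nhds)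
  have h4 : Tendsto (fun n => dist x ((s n).1) + dist ((s n).1) y) atTop (𝓝 (dist x y)) := by
    simp only [hbet]; exact tendsto_const_nhds
  exact ⟨l, hxl, tendsto_nhds_unique h3 h4⟩

theorem my_exists_median {T : Type*} [MetricSpace T] [CompleteSpace T]
    (hmid : ∀ x y : T, ∃ m : T, dist x m = dist x y / 2 ∧ dist m y = dist x y / 2)
    (hfour : ∀ x y z w : T,
      dist x y + dist z w ≤ max (dist x z + dist y w) (dist x w + dist y z))
    (x y z : T) :
    ∃ m : T, dist x m + dist m y = dist x y ∧ dist x m + dist m z = dist x z ∧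
      dist y m + dist m z = dist y z := by
  have c1 : dist y z ≤ dist y x + dist x z := dist_triangle _ _ _
  have c2 : dist x z ≤ dist x y + dist y z := dist_triangle _ _ _
  have cyx : dist y x = dist x y := dist_comm _ _
  set t := (dist x y + dist x z - dist y z) / 2 with hT
  have h0 : 0 ≤ t := by rw [hT]; linarith
  have ht : t ≤ dist x y := by rw [hT]; linarith
  obtain ⟨m, hm1, hm2⟩ := my_exists_between hmid x y t h0 ht
  have l1 : dist x z ≤ dist x m + dist m z := dist_triangle _ _ _
  have l2 : dist y z ≤ dist y m + dist m z := dist_triangle _ _ _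
  have cym : dist y m = dist m y := dist_comm _ _
  have czm : dist z m = dist m z := dist_comm _ _
  have czx : dist z x = dist x z := dist_comm _ _
  have czy : dist z y = dist y z := dist_comm _ _
  have cmx : dist m x = dist x m := dist_comm _ _
  have hup := hfour z m x y
  rcases le_max_iff.mp hup with hcase | hcase
  · exact ⟨m, hm2, by linarith, by linarith⟩
  · exact ⟨m, hm2, by linarith, by linarith⟩


/-- Let `T` be a complete ℝ-tree (a geodesic metric space, given here by a
midpoint property, satisfying the 0-hyperbolic four-point condition), and let `A`, `B` be
disjoint nonempty closed subtrees (closed convex subsets).  Then there is a unique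
geodesic segment `[a, b]` with `a ∈ A`, `b ∈ B` realizing the distance
`d = d(A, B) > 0`, and this segment meets `A` only in `a` and `B` only in `b`. -/
theorem stmt12 {T : Type*} [MetricSpace T] [CompleteSpace T]
    (hmid : ∀ x y : T, ∃ m : T, dist x m = dist x y / 2 ∧ dist m y = dist x y / 2)
    (hfour : ∀ x y z w : T,
      dist x y + dist z w ≤ max (dist x z + dist y w) (dist x w + dist y z))
    (A B : Set T) (hA : A.Nonempty) (hB : B.Nonempty)
    (hAcl : IsClosed A) (hBcl : IsClosed B)
    (hAconv : ∀ x ∈ A, ∀ y ∈ A, ∀ z : T, dist x z + dist z y = dist x y → z ∈ A)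
    (hBconv : ∀ x ∈ B, ∀ y ∈ B, ∀ z : T, dist x z + dist z y = dist x y → z ∈ B)
    (hdisj : Disjoint A B)
    (d : ℝ) (hd : d = sInf {r : ℝ | ∃ a ∈ A, ∃ b ∈ B, dist a b = r}) :
    ∃ a ∈ A, ∃ b ∈ B, dist a b = d ∧ 0 < d ∧
      (∀ z : T, dist a z + dist z b = dist a b →
        (z ∈ A → z = a) ∧ (z ∈ B → z = b)) ∧
      (∀ a' ∈ A, ∀ b' ∈ B, dist a' b' = d → a' = a ∧ b' = b) := by

  classical
  obtain ⟨a₀, ha₀⟩ := hA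
  obtain ⟨b₀, hb₀⟩ := hB
  set S : Set ℝ := {r : ℝ | ∃ a ∈ A, ∃ b ∈ B, dist a b = r} with hS
  have hSne : S.Nonempty := ⟨dist a₀ b₀, a₀, ha₀, b₀, hb₀, rfl⟩
  have hSbdd : BddBelow S := ⟨0, fun r hr => by
    obtain ⟨a, _, b, _, hab⟩ := hr; exact hab ▸ dist_nonneg⟩
  have hdle : ∀ a ∈ A, ∀ b ∈ B, d ≤ dist a b := by
    intro a ha b hb
    rw [hd]
    exact csInf_le hSbdd ⟨a, ha, b, hb, rfl⟩
  have hd0 : 0 ≤ d := by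
    rw [hd]
    exact le_csInf hSne (fun r hr => by
      obtain ⟨a, _, b, _, hab⟩ := hr; exact hab ▸ dist_nonneg)
  -- Bridge inequality
  have BI : ∀ a ∈ A, ∀ a' ∈ A, ∀ b ∈ B, ∀ b' ∈ B,
      dist a a' + dist b b' + 2*d ≤ dist a b + dist a' b' := by
    intro a ha a' ha' b hb b' hb'
    obtain ⟨m, hm1, hm2, hm3⟩ := my_exists_median hmid hfour a a' b
    have hmA : m ∈ A := hAconv a ha a' ha' m hm1
    obtain ⟨n, hn1, hn2, hn3⟩ := my_exists_median hmid hfour b b' m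
    have hnB : n ∈ B := hBconv b hb b' hb' n hn1
    have hdmn : d ≤ dist m n := hdle m hmA n hnB
    have cmb : dist m b = dist b m := dist_comm _ _
    have cnm : dist n m = dist m n := dist_comm _ _
    have cnb : dist n b = dist b n := dist_comm _ _
    have cnb' : dist n b' = dist b' n := dist_comm _ _
    have cma' : dist m a' = dist a' m := dist_comm _ _
    have cmb' : dist m b' = dist b' m := dist_comm _ _
    have t1 : dist a' b ≤ dist a' n + dist n b := dist_triangle _ _ _
    have t2 : dist a' n ≤ dist a' m + dist m n := dist_triangle _ _ _
    have h4 := hfour a' n m b'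
    rcases le_max_iff.mp h4 with hcase | hcase
    · -- forces dist m n ≤ 0, contradiction with disjointness
      exfalso
      have hmn0 : dist m n ≤ 0 := by linarith
      have hmn : m = n := dist_le_zero.mp hmn0
      exact Set.disjoint_left.mp hdisj hmA (hmn ▸ hnB)
    · -- dist a' b' ≥ dist a' m + dist m n + dist n b'
      have hab' : dist a' m + dist m n + dist n b' ≤ dist a' b' := by linarith
      have hab : dist a b = dist a m + dist m n + dist n b := by linarith
      linarith
  -- minimizing sequence
  have hseq : ∀ n : ℕ, ∃ p : T × T, p.1 ∈ A ∧ p.2 ∈ B ∧ dist p.1 p.2 < d + 1/(n+1) := by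
    intro n
    have hpos : (0:ℝ) < 1/(n+1) := by positivity
    have : sInf S < d + 1/(n+1) := by rw [← hd]; linarith
    obtain ⟨r, hrS, hr⟩ := exists_lt_of_csInf_lt hSne this
    obtain ⟨a, ha, b, hb, hab⟩ := hrS
    exact ⟨(a, b), ha, hb, by rw [hab]; exact hr⟩
  choose p hp1 hp2 hp3 using hseq
  have key : ∀ i j : ℕ, dist (p i).1 (p j).1 + dist (p i).2 (p j).2 ≤ 1/(i+1) + 1/(j+1) := by
    intro i j
    have := BI (p i).1 (hp1 i) (p j).1 (hp1 j) (p i).2 (hp2 i) (p j).2 (hp2 j)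
    have hi := hp3 i
    have hj := hp3 j
    linarith
  have hbound : ∀ ε > (0:ℝ), ∃ N : ℕ, ∀ i ≥ N, ∀ j ≥ N,
      1/((i:ℝ)+1) + 1/((j:ℝ)+1) < ε := by
    intro ε hε
    obtain ⟨N, hN⟩ := exists_nat_gt (2/ε)
    refine ⟨N, fun i hi j hj => ?_⟩
    have h2ε : 2/ε < (N:ℝ) := hN
    have hNpos : (0:ℝ) < (N:ℝ) + 1 := by positivity
    have hi1 : (N:ℝ) + 1 ≤ (i:ℝ) + 1 := by
      have : (i:ℝ) ≥ (N:ℝ) := Nat.cast_le.mpr hi; linarith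
    have hj1 : (N:ℝ) + 1 ≤ (j:ℝ) + 1 := by
      have : (j:ℝ) ≥ (N:ℝ) := Nat.cast_le.mpr hj; linarith
    have hki : 1/((i:ℝ)+1) ≤ 1/((N:ℝ)+1) := by
      apply one_div_le_one_div_of_le hNpos hi1
    have hkj : 1/((j:ℝ)+1) ≤ 1/((N:ℝ)+1) := by
      apply one_div_le_one_div_of_le hNpos hj1
    have hkey : 2/((N:ℝ)+1) < ε := by
      rw [div_lt_iff₀ hNpos]
      rw [div_lt_iff₀ hε] at h2ε
      linarith
    have : 1/((i:ℝ)+1) + 1/((j:ℝ)+1) ≤ 2/((N:ℝ)+1) := by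
      have : 2/((N:ℝ)+1) = 1/((N:ℝ)+1) + 1/((N:ℝ)+1) := by ring
      linarith
    linarith
  have hcsa : CauchySeq (fun n => (p n).1) := by
    rw [Metric.cauchySeq_iff]
    intro ε hε
    obtain ⟨N, hN⟩ := hbound ε hε
    refine ⟨N, fun i hi j hj => ?_⟩
    have := key i j
    have h1 : dist (p i).2 (p j).2 ≥ 0 := dist_nonneg
    have := hN i hi j hj
    calc dist (p i).1 (p j).1 ≤ 1/((i:ℝ)+1) + 1/((j:ℝ)+1) := by
          push_cast; linarith [key i j]
      _ < ε := hN i hi j hj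
  have hcsb : CauchySeq (fun n => (p n).2) := by
    rw [Metric.cauchySeq_iff]
    intro ε hε
    obtain ⟨N, hN⟩ := hbound ε hε
    refine ⟨N, fun i hi j hj => ?_⟩
    have h1 : dist (p i).1 (p j).1 ≥ 0 := dist_nonneg
    calc dist (p i).2 (p j).2 ≤ 1/((i:ℝ)+1) + 1/((j:ℝ)+1) := by
          push_cast; linarith [key i j]
      _ < ε := hN i hi j hj
  obtain ⟨a, hla⟩ := cauchySeq_tendsto_of_complete hcsa
  obtain ⟨b, hlb⟩ := cauchySeq_tendsto_of_complete hcsb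
  have haA : a ∈ A := hAcl.mem_of_tendsto hla (Filter.Eventually.of_forall hp1)
  have hbB : b ∈ B := hBcl.mem_of_tendsto hlb (Filter.Eventually.of_forall hp2)
  have h1 : Filter.Tendsto (fun n => dist (p n).1 (p n).2) Filter.atTop (nhds (dist a b)) :=
    hla.dist hlb
  have hone : Filter.Tendsto (fun n : ℕ => d + 1/((n:ℝ)+1)) Filter.atTop (nhds d) := by
    have := tendsto_one_div_add_atTop_nhds_zero_nat (𝕜 := ℝ)
    have h := Filter.Tendsto.const_add d this
    simpa using h
  have h2 : Filter.Tendsto (fun n => dist (p n).1 (p n).2) Filter.atTop (nhds d) := by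
    apply tendsto_of_tendsto_of_tendsto_of_le_of_le tendsto_const_nhds hone
    · intro n; exact hdle _ (hp1 n) _ (hp2 n)
    · intro n; exact le_of_lt (by push_cast; exact hp3 n)
  have hab : dist a b = d := tendsto_nhds_unique h1 h2
  have hdpos : 0 < d := by
    rcases hd0.lt_or_eq with h | h
    · exact h
    · exfalso
      have : dist a b = 0 := by rw [hab, ← h]
      have hab' : a = b := dist_eq_zero.mp this
      exact Set.disjoint_left.mp hdisj haA (hab' ▸ hbB)
  refine ⟨a, haA, b, hbB, hab, hdpos, ?_, ?_⟩
  · intro z hz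
    constructor
    · intro hzA
      have h1 : d ≤ dist z b := hdle z hzA b hbB
      have : dist a z ≤ 0 := by rw [hab] at hz; linarith
      exact (dist_le_zero.mp this).symm
    · intro hzB
      have h1 : d ≤ dist a z := hdle a haA z hzB
      have : dist z b ≤ 0 := by rw [hab] at hz; linarith
      exact dist_le_zero.mp this
  · intro a' ha' b' hb' hab'
    have := BI a haA a' ha' b hbB b' hb'
    rw [hab, hab'] at this
    have h1 : dist a a' ≤ 0 := by linarith [dist_nonneg (x := b) (y := b')]
    have h2 : dist b b' ≤ 0 := by linarith [dist_nonneg (x := a) (y := a')]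
    exact ⟨(dist_le_zero.mp h1).symm, (dist_le_zero.mp h2).symm⟩
end
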